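/- Under the same hypotheses as the previous statement (Q_j an α₁-covering, P_i an α₂-covering, 0 ≤ α₁ ≤ α₂ ≤ 1), for Ω_i = {j ∈ J : Q_j ∩ P_i ≠ ∅} there is a constant c > 0 such that |Ω_i| ≤ c ⟨ξ_i⟩^{d(α₂-α₁)} for all i ∈ I. -/

import Mathlib

open MeasureTheory ENNReal

/-- Japanese bracket ⟨x⟩ = (1+|x|²)^(1/2). -/
noncomputable def jb {d : ℕ} (x : EuclideanSpace ℝ (Fin d)) : ℝ :=
  (1 + ‖x‖ ^ 2) ^ ((1 : ℝ) / 2)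

lemma jb_one_le {d : ℕ} (x : EuclideanSpace ℝ (Fin d)) : 1 ≤ jb x :=
  Real.one_le_rpow (by nlinarith [sq_nonneg ‖x‖]) (by norm_num)

lemma ratio_trick {a b κ2 p q : ℝ} (ha : 1 ≤ a) (hb : 1 ≤ b) (hκ2 : 1 ≤ κ2)
    (hp : 0 ≤ p) (hpq : p ≤ q) (h : a ^ q ≤ κ2 * b ^ q) : a ^ p ≤ κ2 * b ^ p := by
  have hb0 : (0:ℝ) < b := lt_of_lt_of_le one_pos hb
  have ha0 : (0:ℝ) ≤ a := le_trans zero_le_one ha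
  rcases le_total a b with hab | hab
  · calc a ^ p ≤ b ^ p := Real.rpow_le_rpow ha0 hab hp
      _ ≤ κ2 * b ^ p := le_mul_of_one_le_left (Real.rpow_nonneg hb0.le p) hκ2
  · have h1 : (a / b) ^ q ≤ κ2 := by
      rw [Real.div_rpow ha0 hb0.le, div_le_iff₀ (Real.rpow_pos_of_pos hb0 q)]
      exact h
    have h2 : (a / b) ^ p ≤ (a / b) ^ q :=
      Real.rpow_le_rpow_of_exponent_le ((one_le_div hb0).2 hab) hpq
    have h3 : (a / b) ^ p ≤ κ2 := h2.trans h1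
    have h4 : a ^ p = (a/b) ^ p * b ^ p := by
      rw [← Real.mul_rpow (by positivity) hb0.le, div_mul_cancel₀ _ hb0.ne']
    rw [h4]
    exact mul_le_mul_of_nonneg_right h3 (Real.rpow_nonneg hb0.le p)

lemma sum_le_mult {d n₀ : ℕ} {J : Type*} (Q : J → Set (EuclideanSpace ℝ (Fin d)))
    (hQm : ∀ j, MeasurableSet (Q j))
    (hQadm : ∀ j, {j' | (Q j ∩ Q j').Nonempty}.encard ≤ n₀)
    (B : Set (EuclideanSpace ℝ (Fin d))) (hBm : MeasurableSet B)
    (S : Finset J) (hS : ∀ j ∈ S, Q j ⊆ B) :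
    ∑ j ∈ S, volume (Q j) ≤ n₀ * volume B := by
  classical
  have key : ∀ x : EuclideanSpace ℝ (Fin d), (∑ j ∈ S, (Q j).indicator (1 : EuclideanSpace ℝ (Fin d) → ℝ≥0∞) x)
      ≤ (n₀ : ℝ≥0∞) * B.indicator 1 x := by
    intro x
    by_cases hx : x ∈ B
    · rw [Set.indicator_of_mem hx, Pi.one_apply, mul_one]
      have hsum : (∑ j ∈ S, (Q j).indicator (1 : EuclideanSpace ℝ (Fin d) → ℝ≥0∞) x)
          = ((S.filter (fun j => x ∈ Q j)).card : ℝ≥0∞) := by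
        simp only [Set.indicator_apply, Pi.one_apply]
        rw [Finset.sum_boole]
      rw [hsum]
      by_cases hne : (S.filter (fun j => x ∈ Q j)).Nonempty
      · obtain ⟨j₀, hj₀⟩ := hne
        have hx₀ : x ∈ Q j₀ := (Finset.mem_filter.1 hj₀).2
        have hsub : ((S.filter (fun j => x ∈ Q j)) : Set J)
            ⊆ {j' | (Q j₀ ∩ Q j').Nonempty} := by
          intro j' hj'
          exact ⟨x, hx₀, (Finset.mem_filter.1 hj').2⟩
        have henc := (Set.encard_mono hsub).trans (hQadm j₀)
        rw [Set.encard_coe_eq_coe_finsetCard] at henc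
        have hcard : (S.filter (fun j => x ∈ Q j)).card ≤ n₀ := by exact_mod_cast henc
        exact_mod_cast Nat.cast_le.2 hcard
      · rw [Finset.not_nonempty_iff_eq_empty.1 hne]
        simp
    · rw [Set.indicator_of_notMem hx, mul_zero]
      rw [Finset.sum_eq_zero]
      intro j hj
      exact Set.indicator_of_notMem (fun hxQ => hx (hS j hj hxQ)) _
  calc ∑ j ∈ S, volume (Q j)
      = ∑ j ∈ S, ∫⁻ x, (Q j).indicator 1 x := by
        refine Finset.sum_congr rfl fun j _ => ?_
        exact (lintegral_indicator_one (hQm j)).symm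
    _ = ∫⁻ x, ∑ j ∈ S, (Q j).indicator 1 x :=
        (lintegral_finset_sum _ (fun j _ => (measurable_one.indicator (hQm j)))).symm
    _ ≤ ∫⁻ x, (n₀ : ℝ≥0∞) * B.indicator 1 x := lintegral_mono key
    _ = n₀ * volume B := by
        rw [lintegral_const_mul _ (measurable_one.indicator hBm)]
        congr 1
        exact lintegral_indicator_one hBm

lemma radius_le {d : ℕ} (hd : d ≠ 0) {A : Set (EuclideanSpace ℝ (Fin d))}
    {a : EuclideanSpace ℝ (Fin d)} {ρ M : ℝ} (hρ : 0 < ρ)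
    (hsub : Metric.closedBall a ρ ⊆ A) (hfin : volume A ≠ ⊤)
    (hM : (volume A).toReal ≤ M) :
    ρ ≤ (M / (volume (Metric.ball (0:EuclideanSpace ℝ (Fin d)) 1)).toReal) ^ ((1:ℝ)/d) := by
  set v : ℝ := (volume (Metric.ball (0:EuclideanSpace ℝ (Fin d)) 1)).toReal with hv
  have hv0 : 0 < v := ENNReal.toReal_pos (Metric.measure_ball_pos volume 0 one_pos).ne'
    measure_ball_lt_top.ne
  have h1 : volume (Metric.closedBall a ρ) ≤ volume A := measure_mono hsub
  have h2 : (volume (Metric.closedBall a ρ)).toReal ≤ (volume A).toReal :=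
    ENNReal.toReal_mono hfin h1
  rw [Measure.addHaar_closedBall volume a hρ.le] at h2
  rw [ENNReal.toReal_mul, ENNReal.toReal_ofReal (by positivity)] at h2
  rw [finrank_euclideanSpace_fin] at h2
  -- h2 : ρ ^ d * v ≤ (volume A).toReal
  have h3 : ρ ^ d ≤ M / v := by
    rw [le_div_iff₀ hv0]
    exact h2.trans hM
  have hM0 : 0 ≤ M / v := le_trans (by positivity) h3
  calc ρ = (ρ ^ d) ^ ((1:ℝ)/d) := by
        rw [← Real.rpow_natCast ρ d, ← Real.rpow_mul hρ.le]
        rw [mul_one_div, div_self (by exact_mod_cast hd : (d:ℝ) ≠ 0), Real.rpow_one]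
    _ ≤ (M / v) ^ ((1:ℝ)/d) := Real.rpow_le_rpow (by positivity) h3 (by positivity)

set_option maxHeartbeats 1000000 in
/-- If {Q_j} is an α₁-covering and {P_i} an α₂-covering (0 ≤ α₁ ≤ α₂ ≤ 1), with
points ξ_i ∈ P_i, then for Ω_i = {j : Q_j ∩ P_i ≠ ∅} there is c > 0 with
card Ω_i ≤ c⟨ξ_i⟩^{d(α₂-α₁)} for all i. -/
theorem stmt11 {d n₀ : ℕ} {J I : Type*} [Countable J] [Countable I]
    (α₁ α₂ κ K : ℝ) (h1 : 0 ≤ α₁) (h2 : α₁ ≤ α₂) (h3 : α₂ ≤ 1) (hκ : 1 ≤ κ) (hK : 1 ≤ K)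
    (Q : J → Set (EuclideanSpace ℝ (Fin d))) (P : I → Set (EuclideanSpace ℝ (Fin d)))
    (η : J → EuclideanSpace ℝ (Fin d)) (ξ : I → EuclideanSpace ℝ (Fin d))
    (hQm : ∀ j, MeasurableSet (Q j)) (hPm : ∀ i, MeasurableSet (P i))
    (hQcov : ⋃ j, Q j = Set.univ) (hPcov : ⋃ i, P i = Set.univ)
    (hQadm : ∀ j, {j' | (Q j ∩ Q j').Nonempty}.encard ≤ n₀)
    (hPadm : ∀ i, {i' | (P i ∩ P i').Nonempty}.encard ≤ n₀)
    (hQμ : ∀ j, ∀ x ∈ Q j, κ⁻¹ * jb x ^ (α₁ * d) ≤ (volume (Q j)).toReal ∧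
        (volume (Q j)).toReal ≤ κ * jb x ^ (α₁ * d))
    (hPμ : ∀ i, ∀ x ∈ P i, κ⁻¹ * jb x ^ (α₂ * d) ≤ (volume (P i)).toReal ∧
        (volume (P i)).toReal ≤ κ * jb x ^ (α₂ * d))
    (hQball : ∀ j, ∃ (a b : EuclideanSpace ℝ (Fin d)) (ρ R : ℝ), 0 < ρ ∧
        Metric.closedBall a ρ ⊆ Q j ∧ Q j ⊆ Metric.closedBall b R ∧ R ≤ K * ρ)
    (hPball : ∀ i, ∃ (a b : EuclideanSpace ℝ (Fin d)) (ρ R : ℝ), 0 < ρ ∧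
        Metric.closedBall a ρ ⊆ P i ∧ P i ⊆ Metric.closedBall b R ∧ R ≤ K * ρ)
    (hη : ∀ j, η j ∈ Q j) (hξ : ∀ i, ξ i ∈ P i) :
    ∃ c : ℝ, 0 < c ∧ ∀ i, {j | (Q j ∩ P i).Nonempty}.Finite ∧
      ({j | (Q j ∩ P i).Nonempty}.ncard : ℝ) ≤ c * jb (ξ i) ^ ((d : ℝ) * (α₂ - α₁)) := by
  classical
  have hκ0 : (0:ℝ) < κ := lt_of_lt_of_le one_pos hκ
  have hK0 : (0:ℝ) < K := lt_of_lt_of_le one_pos hK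
  -- n₀ ≥ 1
  obtain ⟨j₀, hj₀⟩ : ∃ j, (0 : EuclideanSpace ℝ (Fin d)) ∈ Q j := by
    have h0 : (0 : EuclideanSpace ℝ (Fin d)) ∈ ⋃ j, Q j := by rw [hQcov]; trivial
    exact Set.mem_iUnion.1 h0
  have hn₀ : 1 ≤ (n₀ : ℝ) := by
    have h1' : (1 : ℕ∞) ≤ {j' | (Q j₀ ∩ Q j').Nonempty}.encard :=
      Set.one_le_encard_iff_nonempty.2 ⟨j₀, ⟨0, hj₀, hj₀⟩⟩
    have h2' : (1 : ℕ∞) ≤ (n₀ : ℕ∞) := h1'.trans (hQadm j₀)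
    exact_mod_cast h2'
  have hn₀0 : (0:ℝ) < n₀ := lt_of_lt_of_le one_pos hn₀
  refine ⟨(n₀:ℝ) * (4*K)^d * κ^6, by positivity, fun i => ?_⟩
  set t : ℝ := jb (ξ i) with htdef
  have ht1 : 1 ≤ t := jb_one_le _
  have ht0 : (0:ℝ) < t := lt_of_lt_of_le one_pos ht1
  set Ω : Set J := {j | (Q j ∩ P i).Nonempty} with hΩdef
  by_cases hd : d = 0
  · -- dimension 0 : the space is a single point
    subst hd
    have hsing : ∀ x y : EuclideanSpace ℝ (Fin 0), x = y := fun x y =>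
      by ext k; exact k.elim0
    have hbound : Ω.Finite ∧ Ω.ncard ≤ n₀ := by
      by_cases hne : Ω.Nonempty
      · obtain ⟨j₁, x₁, hx₁Q, hx₁P⟩ := hne
        have hsubset : Ω ⊆ {j' | (Q j₁ ∩ Q j').Nonempty} := by
          rintro j' ⟨y, hyQ, hyP⟩
          exact ⟨x₁, hx₁Q, by rwa [hsing x₁ y]⟩
        have henc := (Set.encard_mono hsubset).trans (hQadm j₁)
        exact Set.encard_le_coe_iff_finite_ncard_le.1 henc
      · rw [Set.not_nonempty_iff_eq_empty.1 hne]
        simp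
    refine ⟨hbound.1, ?_⟩
    have hcard : (Ω.ncard : ℝ) ≤ n₀ := by exact_mod_cast hbound.2
    have hpow : t ^ ((0:ℕ) * (α₂ - α₁) : ℝ) = 1 := by
      norm_num
    calc (Ω.ncard : ℝ) ≤ (n₀:ℝ) := hcard
      _ ≤ (n₀:ℝ) * (4*K)^(0:ℕ) * κ^6 * 1 := by
        have hκ6 : (1:ℝ) ≤ κ^6 := one_le_pow₀ hκ
        simp only [pow_zero, mul_one]
        nlinarith
      _ = (n₀:ℝ) * (4*K)^(0:ℕ) * κ^6 * t ^ (((0:ℕ):ℝ) * (α₂ - α₁)) := by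
        rw [show (((0:ℕ):ℝ) * (α₂ - α₁)) = 0 by norm_num, Real.rpow_zero]
  · -- main case d ≥ 1
    have hdR : (0:ℝ) < d := by exact_mod_cast Nat.pos_of_ne_zero hd
    set v : ℝ := (volume (Metric.ball (0:EuclideanSpace ℝ (Fin d)) 1)).toReal with hvdef
    have hv0 : (0:ℝ) < v := ENNReal.toReal_pos
      (Metric.measure_ball_pos volume 0 one_pos).ne' measure_ball_lt_top.ne
    set r₁ : ℝ := (κ^3 * t ^ (α₂ * d) / v) ^ ((1:ℝ)/d) with hr₁def
    have hr₁0 : (0:ℝ) < r₁ := by positivity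
    set r : ℝ := 4 * K * r₁ with hrdef
    have hr0 : (0:ℝ) < r := by positivity
    set B : Set (EuclideanSpace ℝ (Fin d)) := Metric.closedBall (ξ i) r with hBdef
    have hpq : α₁ * d ≤ α₂ * d := mul_le_mul_of_nonneg_right h2 hdR.le
    have hp0 : 0 ≤ α₁ * d := mul_nonneg h1 hdR.le
    -- bounds on P i
    obtain ⟨aP, bP, ρP, RP, hρP, hPin, hPout, hRP⟩ := hPball i
    have hPfin : volume (P i) ≠ ⊤ :=
      ((measure_mono hPout).trans_lt measure_closedBall_lt_top).ne
    obtain ⟨hPl, hPu⟩ := hPμ i (ξ i) (hξ i)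
    rw [← htdef] at hPl hPu
    have hκ3 : κ ≤ κ^3 := by nlinarith [one_le_pow₀ hκ (n := 2)]
    have hrpow0 : (0:ℝ) ≤ t ^ (α₂ * (d:ℝ)) := Real.rpow_nonneg ht0.le _
    have hPμupper : (volume (P i)).toReal ≤ κ^3 * t ^ (α₂ * (d:ℝ)) :=
      hPu.trans (mul_le_mul_of_nonneg_right hκ3 hrpow0)
    have hρPr : ρP ≤ r₁ := by
      rw [hr₁def]
      exact radius_le hd hρP hPin hPfin hPμupper
    -- key facts for each j ∈ Ω
    have key : ∀ j ∈ Ω, volume (Q j) ≠ ⊤ ∧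
        t ^ (α₁ * d) ≤ κ^3 * (volume (Q j)).toReal ∧ Q j ⊆ B := by
      intro j hj
      obtain ⟨x, hxQ, hxP⟩ := hj
      obtain ⟨aQ, bQ, ρQ, RQ, hρQ, hQin, hQout, hRQ⟩ := hQball j
      have hQfin : volume (Q j) ≠ ⊤ :=
        ((measure_mono hQout).trans_lt measure_closedBall_lt_top).ne
      obtain ⟨hQl, hQu⟩ := hQμ j x hxQ
      obtain ⟨hPl', hPu'⟩ := hPμ i x hxP
      have hjx : 1 ≤ jb x := jb_one_le x
      have hmulκ : ∀ X Y : ℝ, κ⁻¹ * X ≤ Y → X ≤ κ * Y := by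
        intro X Y h
        have := mul_le_mul_of_nonneg_left h hκ0.le
        rwa [← mul_assoc, mul_inv_cancel₀ hκ0.ne', one_mul] at this
      have hA1 : jb x ^ (α₂ * d) ≤ κ^2 * t ^ (α₂ * d) := by
        have e1 := hmulκ _ _ hPl'
        have e2 := mul_le_mul_of_nonneg_left hPu hκ0.le
        calc jb x ^ (α₂ * d) ≤ κ * (volume (P i)).toReal := e1
          _ ≤ κ * (κ * t ^ (α₂ * d)) := e2
          _ = κ^2 * t ^ (α₂ * d) := by ring
      have hA2 : t ^ (α₂ * d) ≤ κ^2 * jb x ^ (α₂ * d) := by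
        have e1 := hmulκ _ _ hPl
        have e2 := mul_le_mul_of_nonneg_left hPu' hκ0.le
        calc t ^ (α₂ * d) ≤ κ * (volume (P i)).toReal := e1
          _ ≤ κ * (κ * jb x ^ (α₂ * d)) := e2
          _ = κ^2 * jb x ^ (α₂ * d) := by ring
      have hκ2 : (1:ℝ) ≤ κ^2 := one_le_pow₀ hκ
      have hB1 : jb x ^ (α₁ * d) ≤ κ^2 * t ^ (α₁ * d) :=
        ratio_trick hjx ht1 hκ2 hp0 hpq hA1
      have hB2 : t ^ (α₁ * d) ≤ κ^2 * jb x ^ (α₁ * d) :=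
        ratio_trick ht1 hjx hκ2 hp0 hpq hA2
      refine ⟨hQfin, ?_, ?_⟩
      · -- lower bound
        have e1 : jb x ^ (α₁ * d) ≤ κ * (volume (Q j)).toReal := hmulκ _ _ hQl
        calc t ^ (α₁ * d) ≤ κ^2 * jb x ^ (α₁ * d) := hB2
          _ ≤ κ^2 * (κ * (volume (Q j)).toReal) :=
              mul_le_mul_of_nonneg_left e1 (by positivity)
          _ = κ^3 * (volume (Q j)).toReal := by ring
      · -- containment
        have hQμupper : (volume (Q j)).toReal ≤ κ^3 * t ^ (α₂ * d) := by
          have hmono : t ^ (α₁ * d) ≤ t ^ (α₂ * d) :=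
            Real.rpow_le_rpow_of_exponent_le ht1 hpq
          calc (volume (Q j)).toReal ≤ κ * jb x ^ (α₁ * d) := hQu
            _ ≤ κ * (κ^2 * t ^ (α₁ * d)) := mul_le_mul_of_nonneg_left hB1 hκ0.le
            _ = κ^3 * t ^ (α₁ * d) := by ring
            _ ≤ κ^3 * t ^ (α₂ * d) := mul_le_mul_of_nonneg_left hmono (by positivity)
        have hρQr : ρQ ≤ r₁ := by
          rw [hr₁def]
          exact radius_le hd hρQ hQin hQfin hQμupper
        intro y hy
        have hRQ0 : dist y bQ ≤ RQ := hQout hy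
        have hxbQ : dist x bQ ≤ RQ := hQout hxQ
        have hxbP : dist x bP ≤ RP := hPout hxP
        have hξbP : dist (ξ i) bP ≤ RP := hPout (hξ i)
        have hd1 : dist y x ≤ 2 * RQ := by
          calc dist y x ≤ dist y bQ + dist x bQ := dist_triangle_right y x bQ
            _ ≤ 2 * RQ := by linarith
        have hd2 : dist x (ξ i) ≤ 2 * RP := by
          calc dist x (ξ i) ≤ dist x bP + dist (ξ i) bP := dist_triangle_right x (ξ i) bP
            _ ≤ 2 * RP := by linarith
        have : dist y (ξ i) ≤ r := by
          calc dist y (ξ i) ≤ dist y x + dist x (ξ i) := dist_triangle y x (ξ i)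
            _ ≤ 2 * RQ + 2 * RP := by linarith
            _ ≤ 2 * (K * ρQ) + 2 * (K * ρP) := by linarith
            _ ≤ 2 * (K * r₁) + 2 * (K * r₁) := by
                have e1 : K * ρQ ≤ K * r₁ := mul_le_mul_of_nonneg_left hρQr hK0.le
                have e2 : K * ρP ≤ K * r₁ := mul_le_mul_of_nonneg_left hρPr hK0.le
                linarith
            _ = r := by rw [hrdef]; ring
        exact Metric.mem_closedBall.2 this
    -- volume of B
    have hr₁pow : r₁ ^ d = κ^3 * t ^ (α₂ * d) / v := by
      rw [hr₁def, ← Real.rpow_natCast _ d, ← Real.rpow_mul (by positivity),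
        one_div, inv_mul_cancel₀ (by exact_mod_cast hd : (d:ℝ) ≠ 0), Real.rpow_one]
    have hvolB : (volume B).toReal = (4*K)^d * κ^3 * t ^ (α₂ * d) := by
      rw [hBdef, Measure.addHaar_closedBall volume _ hr0.le, ENNReal.toReal_mul,
        ENNReal.toReal_ofReal (by positivity), finrank_euclideanSpace_fin, ← hvdef,
        hrdef, mul_pow, hr₁pow]
      field_simp
    have hvolBfin : volume B ≠ ⊤ := measure_closedBall_lt_top.ne
    -- the counting bound for any finite subset of Ω
    have hcount : ∀ S : Finset J, (↑S : Set J) ⊆ Ω →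
        (S.card : ℝ) ≤ (n₀:ℝ) * (4*K)^d * κ^6 * t ^ ((d:ℝ) * (α₂ - α₁)) := by
      intro S hSsub
      have hfinj : ∀ j ∈ S, volume (Q j) ≠ ⊤ := fun j hj => (key j (hSsub hj)).1
      have hsum1 : (S.card : ℝ) * t ^ (α₁ * d) ≤ κ^3 * (∑ j ∈ S, volume (Q j)).toReal := by
        rw [ENNReal.toReal_sum hfinj, Finset.mul_sum]
        calc (S.card : ℝ) * t ^ (α₁ * d) = ∑ _j ∈ S, t ^ (α₁ * d) := by
              rw [Finset.sum_const, nsmul_eq_mul]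
          _ ≤ ∑ j ∈ S, κ^3 * (volume (Q j)).toReal :=
              Finset.sum_le_sum fun j hj => (key j (hSsub hj)).2.1
      have hsum2 : (∑ j ∈ S, volume (Q j)) ≤ (n₀ : ℝ≥0∞) * volume B :=
        sum_le_mult Q hQm hQadm B Metric.isClosed_closedBall.measurableSet S
          (fun j hj => (key j (hSsub hj)).2.2)
      have hsum3 : (∑ j ∈ S, volume (Q j)).toReal ≤ (n₀:ℝ) * (volume B).toReal := by
        have := ENNReal.toReal_mono (by
          exact ENNReal.mul_ne_top (ENNReal.natCast_ne_top n₀) hvolBfin) hsum2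
        rwa [ENNReal.toReal_mul, ENNReal.toReal_natCast] at this
      have hT : (0:ℝ) < t ^ (α₁ * d) := Real.rpow_pos_of_pos ht0 _
      have hsplit : t ^ (α₂ * d) = t ^ (α₁ * d) * t ^ ((d:ℝ) * (α₂ - α₁)) := by
        rw [← Real.rpow_add ht0]
        ring_nf
      have hchain : (S.card : ℝ) * t ^ (α₁ * d)
          ≤ ((n₀:ℝ) * (4*K)^d * κ^6 * t ^ ((d:ℝ) * (α₂ - α₁))) * t ^ (α₁ * d) := by
        calc (S.card : ℝ) * t ^ (α₁ * d)
            ≤ κ^3 * (∑ j ∈ S, volume (Q j)).toReal := hsum1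
          _ ≤ κ^3 * ((n₀:ℝ) * (volume B).toReal) :=
              mul_le_mul_of_nonneg_left hsum3 (by positivity)
          _ = κ^3 * ((n₀:ℝ) * ((4*K)^d * κ^3 * (t ^ (α₁ * d) * t ^ ((d:ℝ) * (α₂ - α₁))))) := by
              rw [hvolB, ← hsplit]
          _ = ((n₀:ℝ) * (4*K)^d * κ^6 * t ^ ((d:ℝ) * (α₂ - α₁))) * t ^ (α₁ * d) := by ring
      exact le_of_mul_le_mul_right hchain hT
    -- finiteness
    have hΩfin : Ω.Finite := by
      by_contra hinf
      have hinf' : Ω.Infinite := hinf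
      obtain ⟨Sset, hsub, hfin, hcard⟩ := hinf'.exists_subset_ncard_eq
        (⌈(n₀:ℝ) * (4*K)^d * κ^6 * t ^ ((d:ℝ) * (α₂ - α₁))⌉₊ + 1)
      have h := hcount hfin.toFinset (by rwa [Set.Finite.coe_toFinset])
      rw [← Set.ncard_eq_toFinset_card Sset hfin] at h
      rw [hcard] at h
      have hceil := Nat.le_ceil ((n₀:ℝ) * (4*K)^d * κ^6 * t ^ ((d:ℝ) * (α₂ - α₁)))
      push_cast at h
      linarith
    refine ⟨hΩfin, ?_⟩
    have h := hcount hΩfin.toFinset (by rw [Set.Finite.coe_toFinset])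
    rwa [← Set.ncard_eq_toFinset_card Ω hΩfin] at h
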